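/- (Lower bound of the Lagrangian, part of Lemma 3.2.) Assume ρ/2 − L_h/ρ − L_h > 0, f(U) ≥ 0 for all U ∈ ℝ^M, and h(V) ≥ 0 for all V ∈ ℝ^N. Then for ADMM iterates (U^k, V^k, P^k) as in the context and every k ≥ 1, L(U^k, V^k, P^k) ≥ (L_h/ρ) · ‖V^k − H U^k‖² ≥ 0. -/

import Mathlib

open scoped RealInnerProductSpace
open Filter

/-- Matrix–vector product `H U` as a map between Euclidean spaces. -/
noncomputable def mvec {M N : ℕ} (H : Matrix (Fin N) (Fin M) ℝ)
    (U : EuclideanSpace ℝ (Fin M)) : EuclideanSpace ℝ (Fin N) :=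
  (WithLp.equiv 2 (Fin N → ℝ)).symm (H.mulVec (WithLp.equiv 2 (Fin M → ℝ) U))

/-- The augmented Lagrangian
`L(U,V,P) = f(U) + h(V) + ⟨P, V − HU⟩ + (ρ/2)‖V − HU‖²`. -/
noncomputable def lagr {M N : ℕ} (H : Matrix (Fin N) (Fin M) ℝ) (ρ : ℝ)
    (f : EuclideanSpace ℝ (Fin M) → ℝ) (h : EuclideanSpace ℝ (Fin N) → ℝ)
    (U : EuclideanSpace ℝ (Fin M)) (V P : EuclideanSpace ℝ (Fin N)) : ℝ :=
  f U + h V + ⟪P, V - mvec H U⟫ + (ρ / 2) * ‖V - mvec H U‖ ^ 2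

/-- The box constraint set `K = {U : 0 ≤ Uᵢ ≤ 1 for all i}`. -/
def Kbox (M : ℕ) : Set (EuclideanSpace ℝ (Fin M)) := {U | ∀ i, 0 ≤ U i ∧ U i ≤ 1}

/-- Descent-type lemma (weak form): if the gradient of `h` is `Lh`-Lipschitz then
`h y - h x - ⟪∇h(x), y - x⟫ ≤ Lh ‖y - x‖²`. -/
lemma descent_aux {N : ℕ} (Lh : ℝ) (h : EuclideanSpace ℝ (Fin N) → ℝ)
    (hdiff : Differentiable ℝ h)
    (hlip : ∀ V W : EuclideanSpace ℝ (Fin N),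
      ‖gradient h V - gradient h W‖ ≤ Lh * ‖V - W‖) (hLh : 0 ≤ Lh)
    (x y : EuclideanSpace ℝ (Fin N)) :
    h y - h x - ⟪gradient h x, y - x⟫ ≤ Lh * ‖y - x‖ ^ 2 := by
  set F : EuclideanSpace ℝ (Fin N) → ℝ := fun z => h z - ⟪gradient h x, z⟫ with hF
  have key : ‖F y - F x‖ ≤ (Lh * ‖y - x‖) * ‖y - x‖ := by
    apply (convex_segment x y).norm_image_sub_le_of_norm_hasFDerivWithin_le
      (f' := fun z => InnerProductSpace.toDual ℝ _ (gradient h z) - innerSL ℝ (gradient h x))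
    · intro z hz
      exact (((hdiff z).hasGradientAt.hasFDerivAt).sub
        ((innerSL ℝ (gradient h x)).hasFDerivAt)).hasFDerivWithinAt
    · intro z hz
      have heq : (InnerProductSpace.toDual ℝ _ (gradient h z) - innerSL ℝ (gradient h x))
          = innerSL ℝ (gradient h z - gradient h x) := by
        ext v; simp [inner_sub_left]
      simp only [heq, innerSL_apply_norm]
      refine (hlip z x).trans ?_
      gcongr
      obtain ⟨a, b, ha, hb, hab, rfl⟩ := hz
      have : a • x + b • y - x = b • (y - x) := by
        rw [smul_sub]
        rw [show a = 1 - b by linarith]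
        module
      rw [this, norm_smul]
      simpa [abs_of_nonneg hb] using mul_le_of_le_one_left (norm_nonneg _) (by linarith : b ≤ 1)
    · exact left_mem_segment ℝ x y
    · exact right_mem_segment ℝ x y
  have h2 : F y - F x ≤ (Lh * ‖y - x‖) * ‖y - x‖ := (le_abs_self _).trans key
  simp only [hF, inner_sub_right] at h2 ⊢
  nlinarith [h2]

/-- First-order optimality condition in the direction `Vk - A` for the `V`-minimization. -/
lemma foc_aux {N : ℕ} (ρ : ℝ) (h : EuclideanSpace ℝ (Fin N) → ℝ)
    (hdiff : Differentiable ℝ h) (C : ℝ)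
    (Vk A P0 : EuclideanSpace ℝ (Fin N))
    (hmin : ∀ V' : EuclideanSpace ℝ (Fin N),
      C + h Vk + ⟪P0, Vk - A⟫ + (ρ/2) * ‖Vk - A‖^2
        ≤ C + h V' + ⟪P0, V' - A⟫ + (ρ/2) * ‖V' - A‖^2) :
    ⟪gradient h Vk, Vk - A⟫ + ⟪P0, Vk - A⟫ + ρ * ‖Vk - A‖^2 = 0 := by
  set w := Vk - A with hw
  set φ : ℝ → ℝ := fun t =>
    C + h (Vk + t • w) + ((1+t) * ⟪P0, w⟫) + (ρ/2) * ((1+t)^2 * ‖w‖^2) with hφ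
  have hminφ : IsLocalMin φ 0 := by
    apply Filter.Eventually.of_forall
    intro t
    have h1 : Vk + t • w - A = (1 + t) • w := by rw [hw]; module
    have h0 : Vk + (0:ℝ) • w = Vk := by simp
    have := hmin (Vk + t • w)
    simp only [hφ, h0, h1, inner_smul_right, norm_smul, mul_pow, zero_smul, add_zero,
      Real.norm_eq_abs, sq_abs] at *
    ring_nf at this ⊢
    linarith [this]
  have hline : HasDerivAt (fun t : ℝ => Vk + t • w) w 0 := by
    simpa using ((hasDerivAt_id (0:ℝ)).smul_const w).const_add Vk
  have hh : HasDerivAt (fun t : ℝ => h (Vk + t • w)) ⟪gradient h Vk, w⟫ 0 := by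
    have := ((hdiff Vk).hasGradientAt.hasFDerivAt).comp_hasDerivAt_of_eq 0 hline (by simp)
    exact this
  have hφ' : HasDerivAt φ (⟪gradient h Vk, w⟫ + ⟪P0, w⟫ + ρ * ‖w‖^2) 0 := by
    have h1 : HasDerivAt (fun t : ℝ => (1+t) * ⟪P0, w⟫) ⟪P0, w⟫ 0 := by
      simpa using ((hasDerivAt_id (0:ℝ)).const_add 1).mul_const ⟪P0, w⟫
    have h2 : HasDerivAt (fun t : ℝ => (ρ/2) * ((1+t)^2 * ‖w‖^2)) (ρ * ‖w‖^2) 0 := by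
      have := ((((hasDerivAt_id (0:ℝ)).const_add 1).pow 2).mul_const (‖w‖^2)).const_mul (ρ/2)
      refine this.congr_deriv ?_
      norm_num; ring
    exact (((hh.const_add C).add h1).add h2)
  have := hminφ.hasDerivAt_eq_zero hφ'
  linarith [this]

/-- Lower bound of the Lagrangian (part of Lemma 3.2): if `ρ/2 − L_h/ρ − L_h > 0`,
`f ≥ 0` and `h ≥ 0`, then for every `k ≥ 1`,
`L(U^k,V^k,P^k) ≥ (L_h/ρ)‖V^k − HU^k‖² ≥ 0`. -/
theorem admm_lagrangian_lower_bound
    {M N : ℕ} (H : Matrix (Fin N) (Fin M) ℝ) (ρ Lh : ℝ)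
    (hρ : 0 < ρ) (hLh : 0 < Lh)
    (f : EuclideanSpace ℝ (Fin M) → ℝ) (h : EuclideanSpace ℝ (Fin N) → ℝ)
    (hdiff : Differentiable ℝ h)
    (hlip : ∀ V W : EuclideanSpace ℝ (Fin N),
      ‖gradient h V - gradient h W‖ ≤ Lh * ‖V - W‖)
    (U : ℕ → EuclideanSpace ℝ (Fin M)) (V P : ℕ → EuclideanSpace ℝ (Fin N))
    (hUK : ∀ k, U k ∈ Kbox M)
    (hUmin : ∀ k, ∀ U' ∈ Kbox M,
      lagr H ρ f h (U (k+1)) (V k) (P k) ≤ lagr H ρ f h U' (V k) (P k))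
    (hVmin : ∀ k, ∀ V' : EuclideanSpace ℝ (Fin N),
      lagr H ρ f h (U (k+1)) (V (k+1)) (P k) ≤ lagr H ρ f h (U (k+1)) V' (P k))
    (hPup : ∀ k, P (k+1) = P k + ρ • (V (k+1) - mvec H (U (k+1))))
    (hcond : 0 < ρ / 2 - Lh / ρ - Lh)
    (hf : ∀ U' : EuclideanSpace ℝ (Fin M), 0 ≤ f U')
    (hh : ∀ V' : EuclideanSpace ℝ (Fin N), 0 ≤ h V')
    :
    ∀ k : ℕ, 1 ≤ k →
      lagr H ρ f h (U k) (V k) (P k) ≥ (Lh / ρ) * ‖V k - mvec H (U k)‖ ^ 2 ∧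
        (Lh / ρ) * ‖V k - mvec H (U k)‖ ^ 2 ≥ 0 := by
  intro k hk
  obtain ⟨m, rfl⟩ : ∃ m, k = m + 1 := ⟨k - 1, by omega⟩
  set Vk := V (m+1) with hVk
  set A := mvec H (U (m+1)) with hA
  set w : EuclideanSpace ℝ (Fin N) := Vk - A with hw
  set g := gradient h Vk with hg
  -- first-order condition
  have foc : ⟪g, w⟫ + ⟪P m, w⟫ + ρ * ‖w‖^2 = 0 := by
    refine foc_aux ρ h hdiff (f (U (m+1))) Vk A (P m) ?_
    intro V'
    simpa [lagr, hA, hw] using hVmin m V'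
  -- descent lemma applied with x = Vk, y = A
  have desc : h A - h Vk - ⟪g, A - Vk⟫ ≤ Lh * ‖A - Vk‖ ^ 2 :=
    descent_aux Lh h hdiff hlip hLh.le Vk A
  have hrev : ⟪g, A - Vk⟫ = -⟪g, w⟫ := by
    rw [hw, show A - Vk = -(Vk - A) from (neg_sub _ _).symm, inner_neg_right]
  have hnrev : ‖A - Vk‖ = ‖w‖ := by rw [hw, norm_sub_rev]
  rw [hrev, hnrev] at desc
  -- inner product with the updated multiplier
  have hP : ⟪P (m+1), w⟫ = ⟪P m, w⟫ + ρ * ‖w‖^2 := by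
    rw [hPup m, ← hA, ← hVk, ← hw, inner_add_left, real_inner_smul_left,
      real_inner_self_eq_norm_sq]
  have hsq : 0 ≤ ‖w‖^2 := sq_nonneg _
  have hcnd : 0 ≤ (ρ/2 - Lh/ρ - Lh) * ‖w‖^2 := mul_nonneg hcond.le hsq
  constructor
  · show lagr H ρ f h (U (m+1)) Vk (P (m+1)) ≥ Lh / ρ * ‖w‖^2
    rw [lagr, ← hA, ← hw, hP]
    nlinarith [hf (U (m+1)), hh A, desc, foc]
  · show Lh / ρ * ‖w‖^2 ≥ 0
    positivity
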